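/- Let V be a finite-dimensional real inner product space and A : V → V a linear map with ⟪A v, v⟫ ≥ 0 for all v ∈ V. Then for every k > 0 and every g ∈ V there exists W ∈ V such that W + k(1 + ⟪A W, W⟫) · A W = g. -/

import Mathlib

/-- Existence part of Theorem 5.2: solvability of one backward Euler step via
Brouwer's fixed point theorem. -/
theorem backward_euler_existence
    {V : Type*} [NormedAddCommGroup V] [InnerProductSpace ℝ V] [FiniteDimensional ℝ V]
    (A : V →ₗ[ℝ] V)
    (hpos : ∀ v : V, (0 : ℝ) ≤ inner ℝ (A v) v)
    (k : ℝ) (hk : 0 < k) (g : V) :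
    ∃ W : V, W + (k * (1 + (inner ℝ (A W) W : ℝ))) • A W = g := by
  classical
  set B : V →L[ℝ] V := LinearMap.toContinuousLinearMap A with hB
  have hBapp : ∀ v, B v = A v := fun v => rfl
  -- invertibility of 1 + c • B for c ≥ 0
  have hunit : ∀ c : ℝ, 0 ≤ c → IsUnit ((1 : V →L[ℝ] V) + c • B) := by
    intro c hc
    set T : V →L[ℝ] V := (1 : V →L[ℝ] V) + c • B with hT
    have hTapp : ∀ v, T v = v + c • B v := by
      intro v; simp [hT]
    have h0 : ∀ w, T w = 0 → w = 0 := by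
      intro w hw
      have h1 : (0 : ℝ) = ‖w‖ ^ 2 + c * inner ℝ (B w) w := by
        have := congrArg (fun x => (inner ℝ x w : ℝ)) hw
        simp only [hTapp, inner_add_left, real_inner_smul_left,
          real_inner_self_eq_norm_sq, inner_zero_left] at this
        linarith [this]
      have h2 : ‖w‖ ^ 2 = 0 := by
        have := mul_nonneg hc (hpos w)
        have hpw : (0:ℝ) ≤ c * inner ℝ (B w) w := by
          simpa [hBapp] using this
        nlinarith [sq_nonneg ‖w‖]
      have := pow_eq_zero_iff (n := 2) (by norm_num) |>.mp h2
      exact norm_eq_zero.mp this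
    have hinj : Function.Injective T := by
      intro u v huv
      have := h0 (u - v) (by rw [map_sub, huv, sub_self])
      exact sub_eq_zero.mp this
    have hsurj : Function.Surjective T :=
      (LinearMap.injective_iff_surjective (f := (T : V →ₗ[ℝ] V))).mp hinj
    let e : V ≃ₗ[ℝ] V := LinearEquiv.ofBijective (T : V →ₗ[ℝ] V) ⟨hinj, hsurj⟩
    let e' : V ≃L[ℝ] V := e.toContinuousLinearEquiv
    refine ⟨⟨T, (e'.symm : V →L[ℝ] V), ?_, ?_⟩, rfl⟩
    · ext v
      have h1 : T (e'.symm v) = e' (e'.symm v) := rfl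
      simp [ContinuousLinearMap.mul_apply, h1]
    · ext v
      have h1 : T v = e' v := rfl
      simp [ContinuousLinearMap.mul_apply, h1]
  -- the resolvent family
  set W : ℝ → V := fun s => Ring.inverse ((1 : V →L[ℝ] V) + (k * (1 + s)) • B) g with hW
  have hcpos : ∀ s : ℝ, 0 ≤ s → 0 ≤ k * (1 + s) := by
    intro s hs; positivity
  have hTW : ∀ s : ℝ, 0 ≤ s → W s + (k * (1 + s)) • B (W s) = g := by
    intro s hs
    have hu := hunit _ (hcpos s hs)
    have h := Ring.mul_inverse_cancel _ hu
    have h2 := congrArg (fun f : V →L[ℝ] V => f g) h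
    simp only [ContinuousLinearMap.mul_apply, ContinuousLinearMap.one_apply] at h2
    simpa [ContinuousLinearMap.add_apply, ContinuousLinearMap.smul_apply,
      ContinuousLinearMap.one_apply, hW] using h2
  set φ : ℝ → ℝ := fun s => inner ℝ (B (W s)) (W s) with hφ
  have hφnonneg : ∀ s, 0 ≤ φ s := fun s => by simpa [hφ, hBapp] using hpos (W s)
  -- identity and bounds
  have hip : ∀ s : ℝ, 0 ≤ s → (inner ℝ g (W s) : ℝ) = ‖W s‖ ^ 2 + (k * (1 + s)) * φ s := by
    intro s hs
    rw [← hTW s hs]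
    simp [inner_add_left, real_inner_smul_left, real_inner_self_eq_norm_sq, hφ]
  have hWnorm : ∀ s : ℝ, 0 ≤ s → ‖W s‖ ≤ ‖g‖ := by
    intro s hs
    have h1 := hip s hs
    have h2 : (inner ℝ g (W s) : ℝ) ≤ ‖g‖ * ‖W s‖ := real_inner_le_norm g (W s)
    have h3 := mul_nonneg (hcpos s hs) (hφnonneg s)
    nlinarith [norm_nonneg (W s), norm_nonneg g]
  have hφbound : ∀ s : ℝ, 0 ≤ s → φ s ≤ ‖g‖ ^ 2 / k := by
    intro s hs
    have h1 := hip s hs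
    have h2 : (inner ℝ g (W s) : ℝ) ≤ ‖g‖ * ‖W s‖ := real_inner_le_norm g (W s)
    have h3 := hWnorm s hs
    have hck : k ≤ k * (1 + s) := by nlinarith
    rw [le_div_iff₀ hk]
    nlinarith [hφnonneg s, sq_nonneg ‖W s‖, norm_nonneg (W s), norm_nonneg g]
  set M : ℝ := ‖g‖ ^ 2 / k with hM
  have hM0 : 0 ≤ M := by positivity
  -- continuity on [0, M]
  have hWcont : ContinuousOn W (Set.Icc 0 M) := by
    intro s hs
    have hu := hunit _ (hcpos s hs.1)
    have hc1 : Continuous fun t : ℝ => (1 : V →L[ℝ] V) + (k * (1 + t)) • B :=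
      continuous_const.add
        (((continuous_const.mul (continuous_const.add continuous_id)).smul continuous_const))
    have hc2 : ContinuousAt (fun t : ℝ => Ring.inverse ((1 : V →L[ℝ] V) + (k * (1 + t)) • B)) s := by
      have houter : ContinuousAt Ring.inverse ((1 : V →L[ℝ] V) + (k * (1 + s)) • B) := by
        have := NormedRing.inverse_continuousAt hu.unit
        rwa [IsUnit.unit_spec] at this
      exact ContinuousAt.comp (g := Ring.inverse) houter
        (hc1.continuousAt : ContinuousAt (fun t : ℝ => (1 : V →L[ℝ] V) + (k * (1 + t)) • B) s)
    exact ((ContinuousLinearMap.apply ℝ V g).continuous.continuousAt.comp hc2).continuousWithinAt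
  have hφcont : ContinuousOn φ (Set.Icc 0 M) := by
    exact ContinuousOn.inner (B.continuous.comp_continuousOn hWcont) hWcont
  -- intermediate value theorem
  have hIVT : ∃ s ∈ Set.Icc (0:ℝ) M, φ s - s = 0 := by
    have hcont : ContinuousOn (fun s => φ s - s) (Set.Icc 0 M) :=
      hφcont.sub continuousOn_id
    have hmem : (0:ℝ) ∈ Set.Icc ((fun s => φ s - s) M) ((fun s => φ s - s) 0) := by
      constructor
      · simpa using sub_nonpos.mpr (hφbound M hM0)
      · simpa using hφnonneg 0
    have := intermediate_value_Icc' hM0 hcont hmem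
    obtain ⟨s, hs, hseq⟩ := this
    exact ⟨s, hs, hseq⟩
  obtain ⟨s, hs, hseq⟩ := hIVT
  have hsφ : φ s = s := by linarith [sub_eq_zero.mp hseq]
  refine ⟨W s, ?_⟩
  have h1 : (inner ℝ (A (W s)) (W s) : ℝ) = s := by
    exact hsφ
  rw [h1]
  have := hTW s hs.1
  simpa [hBapp] using this
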